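/- Let H be Hermitian with minimum eigenvalue λ(H), let ρ be a density matrix with tr(Hρ) ≤ λ(H) + δ, and let P project onto eigenvectors of H with eigenvalue less than λ(H) + δ' where δ' > 0 and tr(Pρ) > 0. Define ρ' = PρP / tr(Pρ). Then (1/2)‖ρ − ρ'‖₁ ≤ √(δ/δ'), where ‖·‖₁ is the trace norm. -/

import Mathlib

open Matrix
open scoped Kronecker Matrix.Norms.L2Operator ComplexOrder

noncomputable section

/-- Trace norm `‖A‖₁ = tr √(Aᴴ A)`. -/
noncomputable def posSemidefSqrt {m : ℕ} {A : Matrix (Fin m) (Fin m) ℂ} (hA : A.PosSemidef) :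
    Matrix (Fin m) (Fin m) ℂ :=
  (hA.1.eigenvectorUnitary : Matrix (Fin m) (Fin m) ℂ) *
    Matrix.diagonal ((↑) ∘ (Real.sqrt ∘ hA.1.eigenvalues)) *
    (star hA.1.eigenvectorUnitary : Matrix (Fin m) (Fin m) ℂ)

noncomputable def traceNorm {m : ℕ} (A : Matrix (Fin m) (Fin m) ℂ) : ℝ :=
  ((posSemidefSqrt (Matrix.posSemidef_conjTranspose_mul_self A)).trace).re

/-- Quadratic form `Re ⟨v, H v⟩`. -/
noncomputable def quadForm {m : Type*} [Fintype m] (H : Matrix m m ℂ) (v : m → ℂ) : ℝ :=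
  (dotProduct (star v) (H *ᵥ v)).re

/-- Squared Euclidean norm of a vector. -/
noncomputable def vnormSq {m : Type*} [Fintype m] (v : m → ℂ) : ℝ :=
  (dotProduct (star v) v).re

lemma posSemidefSqrt_posSemidef {m : ℕ} {A : Matrix (Fin m) (Fin m) ℂ} (hA : A.PosSemidef) :
    (posSemidefSqrt hA).PosSemidef := by
  unfold posSemidefSqrt
  have h1 : (Matrix.diagonal ((↑) ∘ (Real.sqrt ∘ hA.1.eigenvalues)) :
      Matrix (Fin m) (Fin m) ℂ).PosSemidef :=
    Matrix.PosSemidef.diagonal fun i => by simp [Complex.zero_le_real, Real.sqrt_nonneg]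
  have := h1.mul_mul_conjTranspose_same (hA.1.eigenvectorUnitary : Matrix (Fin m) (Fin m) ℂ)
  rwa [← star_eq_conjTranspose] at this

lemma posSemidefSqrt_mul_self {m : ℕ} {A : Matrix (Fin m) (Fin m) ℂ} (hA : A.PosSemidef) :
    posSemidefSqrt hA * posSemidefSqrt hA = A := by
  unfold posSemidefSqrt
  set U : Matrix (Fin m) (Fin m) ℂ := (hA.1.eigenvectorUnitary : Matrix (Fin m) (Fin m) ℂ) with hU
  have hUU : star U * U = 1 := (Matrix.mem_unitaryGroup_iff').mp (hA.1.eigenvectorUnitary).2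
  conv_rhs => rw [hA.1.spectral_theorem, Unitary.conjStarAlgAut_apply, ← hU]
  rw [show ∀ (X Y : Matrix (Fin m) (Fin m) ℂ), (U*X*star U)*(U*Y*star U) = U*(X*(star U*U)*Y)*star U
    from fun X Y => by noncomm_ring]
  rw [hUU, mul_one, diagonal_mul_diagonal]
  congr 2; congr 1; funext i
  simp [← Complex.ofReal_mul, Real.mul_self_sqrt (hA.eigenvalues_nonneg i)]

open scoped MatrixOrder in
lemma posSemidefSqrt_unique {m : ℕ} {A S : Matrix (Fin m) (Fin m) ℂ} (hA : A.PosSemidef)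
    (hS : S.PosSemidef) (h : S * S = A) : S = posSemidefSqrt hA := by
  have e1 : CFC.sqrt A = S := CFC.sqrt_unique h hS.nonneg
  have e2 : CFC.sqrt A = posSemidefSqrt hA :=
    CFC.sqrt_unique (posSemidefSqrt_mul_self hA) (posSemidefSqrt_posSemidef hA).nonneg
  rw [← e1, e2]

lemma psd_trace {n : ℕ} {A : Matrix (Fin n) (Fin n) ℂ} (hA : A.PosSemidef) :
    A.trace = (A.trace.re : ℂ) ∧ 0 ≤ A.trace.re := by
  have h1 : A.trace = star A.trace := by
    conv_lhs => rw [← hA.1, trace_conjTranspose]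
  have him : A.trace.im = 0 := by
    have := congrArg Complex.im h1
    simp at this; linarith
  refine ⟨Complex.ext rfl him, ?_⟩
  have h2 : ∀ i, 0 ≤ A i i := fun i => by
    exact hA.diag_nonneg
  have : 0 ≤ A.trace := Finset.sum_nonneg fun i _ => h2 i
  exact (Complex.le_def.mp this).1

-- trace of product of PSD matrices is nonneg real
lemma psd_mul_trace {n : ℕ} {A B : Matrix (Fin n) (Fin n) ℂ}
    (hA : A.PosSemidef) (hB : B.PosSemidef) :
    (A * B).trace = ((A * B).trace.re : ℂ) ∧ 0 ≤ ((A * B).trace).re := by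
  have hS := posSemidefSqrt_posSemidef hB
  have key : (A * B).trace = (posSemidefSqrt hB * A * posSemidefSqrt hB).trace := by
    conv_lhs => rw [← posSemidefSqrt_mul_self hB]
    rw [← mul_assoc, trace_mul_cycle]
  have hpsd : (posSemidefSqrt hB * A * posSemidefSqrt hB).PosSemidef := by
    have := hA.mul_mul_conjTranspose_same (posSemidefSqrt hB)
    rwa [hS.1.eq] at this
  rw [key]
  exact psd_trace hpsd


lemma frob_trace {n : ℕ} (M : Matrix (Fin n) (Fin n) ℂ) :
    ((Mᴴ * M).trace).re = ∑ i, ∑ j, ‖M i j‖ ^ 2 := by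
  rw [Matrix.trace, Complex.re_sum]
  rw [Finset.sum_comm]
  congr 1; funext j
  rw [Matrix.diag_apply, Matrix.mul_apply, Complex.re_sum]
  congr 1; funext i
  simp [Matrix.conjTranspose_apply, Complex.sq_norm,
    Complex.normSq_apply, Complex.mul_re]


lemma traceNorm_hermitian {n : ℕ} {D : Matrix (Fin n) (Fin n) ℂ} (hD : D.IsHermitian) :
    traceNorm D = ∑ i, |hD.eigenvalues i| := by
  set U : Matrix (Fin n) (Fin n) ℂ := (hD.eigenvectorUnitary : Matrix (Fin n) (Fin n) ℂ) with hU
  have hUU : star U * U = 1 := (Matrix.mem_unitaryGroup_iff').mp (hD.eigenvectorUnitary).2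
  set S : Matrix (Fin n) (Fin n) ℂ :=
    U * diagonal (fun i => ((|hD.eigenvalues i| : ℝ) : ℂ)) * star U with hS
  have hSpsd : S.PosSemidef := by
    have h1 : (diagonal (fun i => ((|hD.eigenvalues i| : ℝ) : ℂ))).PosSemidef :=
      Matrix.PosSemidef.diagonal fun i => by positivity
    have := h1.mul_mul_conjTranspose_same U
    rwa [← star_eq_conjTranspose] at this
  have hdd : (diagonal (fun i => ((|hD.eigenvalues i| : ℝ) : ℂ))) *
      (diagonal (fun i => ((|hD.eigenvalues i| : ℝ) : ℂ))) =
      (diagonal (RCLike.ofReal ∘ hD.eigenvalues)) * (diagonal (RCLike.ofReal ∘ hD.eigenvalues)) := by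
    simp only [diagonal_mul_diagonal]
    congr 1; funext i
    simp [Matrix.diagonal_apply, ← Complex.ofReal_mul, abs_mul_abs_self, Function.comp]
  have hsq : S ^ 2 = Dᴴ * D := by
    rw [hD.eq]
    conv_rhs => rw [hD.spectral_theorem, Unitary.conjStarAlgAut_apply, ← hU]
    rw [hS, pow_two]
    rw [show ∀ (X Y : Matrix (Fin n) (Fin n) ℂ), (U*X*star U)*(U*Y*star U) = U*(X*(star U*U)*Y)*star U by intros; noncomm_ring]
    rw [show ∀ (X Y : Matrix (Fin n) (Fin n) ℂ), (U*X*star U)*(U*Y*star U) = U*(X*(star U*U)*Y)*star U from fun X Y => by noncomm_ring]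
    rw [hUU, mul_one, mul_one, hdd]
  have hkey : S = posSemidefSqrt (Matrix.posSemidef_conjTranspose_mul_self D) :=
    posSemidefSqrt_unique _ hSpsd ((sq S).symm.trans hsq)
  rw [traceNorm, ← hkey, hS, trace_mul_cycle, hUU, one_mul, trace_diagonal, Complex.re_sum]
  simp

lemma traceNorm_sym_bound {n : ℕ} (A B D : Matrix (Fin n) (Fin n) ℂ) (hD : D.IsHermitian)
    (hid : D = (1/2 : ℂ) • (A * Bᴴ + B * Aᴴ)) :
    traceNorm D ≤ Real.sqrt ((Aᴴ * A).trace.re) * Real.sqrt ((Bᴴ * B).trace.re) := by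
  set U : Matrix (Fin n) (Fin n) ℂ := (hD.eigenvectorUnitary : Matrix (Fin n) (Fin n) ℂ) with hU
  have hUU : star U * U = 1 := (Matrix.mem_unitaryGroup_iff').mp (hD.eigenvectorUnitary).2
  have hUU' : U * star U = 1 := (Matrix.mem_unitaryGroup_iff).mp (hD.eigenvectorUnitary).2
  set A' : Matrix (Fin n) (Fin n) ℂ := star U * A with hA'
  set B' : Matrix (Fin n) (Fin n) ℂ := star U * B with hB'
  have hsU : (star U)ᴴ = U := by rw [star_eq_conjTranspose, conjTranspose_conjTranspose]
  have hdiag : star U * D * U = diagonal (RCLike.ofReal ∘ hD.eigenvalues) :=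
    by
      conv_lhs => rw [hD.spectral_theorem, Unitary.conjStarAlgAut_apply, ← hU]
      rw [show star U * (U * diagonal (RCLike.ofReal ∘ hD.eigenvalues) * star U) * U =
        (star U * U) * diagonal (RCLike.ofReal ∘ hD.eigenvalues) * (star U * U) by noncomm_ring,
        hUU, one_mul, mul_one]
  have hsym : star U * D * U = (1/2 : ℂ) • (A' * B'ᴴ + B' * A'ᴴ) := by
    rw [hid, hA', hB', conjTranspose_mul, conjTranspose_mul, hsU,
      Matrix.mul_smul, Matrix.smul_mul]
    congr 1
    simp only [Matrix.mul_add, Matrix.add_mul, Matrix.mul_assoc]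
  -- eigenvalues are real parts of diagonal entries of A' * B'ᴴ
  have hmu : ∀ i, hD.eigenvalues i = ((A' * B'ᴴ) i i).re := by
    intro i
    have h2 : (B' * A'ᴴ) i i = star ((A' * B'ᴴ) i i) := by
      simp only [Matrix.mul_apply, Matrix.conjTranspose_apply, star_sum, star_mul', star_star]
      exact Finset.sum_congr rfl fun j _ => mul_comm _ _
    have h1 : (RCLike.ofReal (hD.eigenvalues i) : ℂ) =
        ((((A' * B'ᴴ) i i).re : ℝ) : ℂ) := by
      have e1 : (star U * D * U) i i = (RCLike.ofReal ∘ hD.eigenvalues) i := by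
        rw [hdiag, diagonal_apply_eq]
      have e2 : (star U * D * U) i i = ((1/2 : ℂ) • (A' * B'ᴴ + B' * A'ᴴ)) i i := by rw [hsym]
      rw [e1] at e2
      simp only [Function.comp_apply] at e2
      rw [e2, Matrix.smul_apply, Matrix.add_apply, h2]
      rw [show star ((A' * B'ᴴ) i i) = (starRingEnd ℂ) ((A' * B'ᴴ) i i) from rfl, Complex.add_conj]
      rw [smul_eq_mul]
      push_cast
      ring
    have := congrArg Complex.re h1
    simpa using this
  have habs : ∀ i, |hD.eigenvalues i| ≤ ∑ j, ‖A' i j‖ * ‖B' i j‖ := by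
    intro i
    rw [hmu i]
    refine (Complex.abs_re_le_norm _).trans ?_
    rw [Matrix.mul_apply]
    refine (norm_sum_le _ _).trans ?_
    refine le_of_eq (Finset.sum_congr rfl fun j _ => ?_)
    rw [norm_mul, Matrix.conjTranspose_apply,
      show star (B' i j) = (starRingEnd ℂ) (B' i j) from rfl, Complex.norm_conj]
  -- Cauchy-Schwarz over all pairs
  have hCS : ∑ i, ∑ j, ‖A' i j‖ * ‖B' i j‖ ≤
      Real.sqrt (∑ i, ∑ j, ‖A' i j‖ ^ 2) *
      Real.sqrt (∑ i, ∑ j, ‖B' i j‖ ^ 2) := by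
    have := Real.sum_mul_le_sqrt_mul_sqrt (Finset.univ : Finset (Fin n × Fin n))
      (fun p => ‖A' p.1 p.2‖) (fun p => ‖B' p.1 p.2‖)
    simpa [Fintype.sum_prod_type] using this
  -- unitary invariance of the Frobenius norm
  have hinv : ∀ M : Matrix (Fin n) (Fin n) ℂ, (star U * M)ᴴ * (star U * M) = Mᴴ * M := by
    intro M
    rw [conjTranspose_mul, hsU, Matrix.mul_assoc, ← Matrix.mul_assoc U, hUU', Matrix.one_mul]
  calc traceNorm D = ∑ i, |hD.eigenvalues i| := traceNorm_hermitian hD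
    _ ≤ ∑ i, ∑ j, ‖A' i j‖ * ‖B' i j‖ :=
        Finset.sum_le_sum fun i _ => habs i
    _ ≤ _ := hCS
    _ = _ := by rw [← frob_trace A', ← frob_trace B', hinv A, hinv B]

/-- trace-distance bound `(1/2)‖ρ − ρ'‖₁ ≤ √(δ/δ')` for the renormalized
low-energy part `ρ' = PρP / tr(Pρ)`. -/
theorem low_energy_trace_dist {n : ℕ} (H ρ P ρ' : Matrix (Fin n) (Fin n) ℂ)
    (hH : H.IsHermitian) (hρ : ρ.PosSemidef) (hρ1 : ρ.trace = 1)
    (lam δ δ' : ℝ) (hδ : 0 ≤ δ) (hδ' : 0 < δ')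
    (hlam : IsLeast (Set.range hH.eigenvalues) lam)
    (hP : P = (hH.eigenvectorUnitary : Matrix (Fin n) (Fin n) ℂ) *
        Matrix.diagonal (fun i => if hH.eigenvalues i < lam + δ' then (1 : ℂ) else 0) *
        star (hH.eigenvectorUnitary : Matrix (Fin n) (Fin n) ℂ))
    (htr : ((H * ρ).trace).re ≤ lam + δ)
    (hPρ : 0 < ((P * ρ).trace).re)
    (hρ' : ρ' = ((P * ρ).trace)⁻¹ • (P * ρ * P)) :
    (1 / 2) * traceNorm (ρ - ρ') ≤ Real.sqrt (δ / δ') := by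
  set U : Matrix (Fin n) (Fin n) ℂ := (hH.eigenvectorUnitary : Matrix (Fin n) (Fin n) ℂ) with hU
  have hUU : star U * U = 1 := (Matrix.mem_unitaryGroup_iff').mp (hH.eigenvectorUnitary).2
  have hUU' : U * star U = 1 := (Matrix.mem_unitaryGroup_iff).mp (hH.eigenvectorUnitary).2
  have hsU : (star U)ᴴ = U := by rw [star_eq_conjTranspose, conjTranspose_conjTranspose]
  set d : Matrix (Fin n) (Fin n) ℂ :=
    Matrix.diagonal (fun i => if hH.eigenvalues i < lam + δ' then (1 : ℂ) else 0) with hd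
  -- P is Hermitian
  have hstarfun : star (fun i => if hH.eigenvalues i < lam + δ' then (1:ℂ) else 0) =
      (fun i => if hH.eigenvalues i < lam + δ' then (1:ℂ) else 0) := by
    funext i
    simp only [Pi.star_apply]
    split <;> simp
  have hPh : Pᴴ = P := by
    rw [hP, conjTranspose_mul, conjTranspose_mul, hsU, hd, diagonal_conjTranspose,
      hstarfun, star_eq_conjTranspose, Matrix.mul_assoc]
  -- P is idempotent
  have hitefun : (fun i => (if hH.eigenvalues i < lam + δ' then (1:ℂ) else 0) *
      (if hH.eigenvalues i < lam + δ' then (1:ℂ) else 0)) =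
      (fun i => if hH.eigenvalues i < lam + δ' then (1:ℂ) else 0) := by
    funext i; split <;> simp
  have hdd : d * d = d := by
    rw [hd, diagonal_mul_diagonal, hitefun]
  have hP2 : P * P = P := by
    rw [hP]
    rw [show (U*d*star U)*(U*d*star U) = U*(d*(star U*U)*d)*star U from by noncomm_ring]
    rw [hUU, mul_one, hdd]
  -- P and Q = 1 - P are PSD
  have hdpsd : d.PosSemidef := by
    rw [hd]
    exact Matrix.PosSemidef.diagonal fun i => by split <;> simp
  have hPpsd : P.PosSemidef := by
    rw [hP]
    have := hdpsd.mul_mul_conjTranspose_same U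
    rwa [← star_eq_conjTranspose] at this
  set Q : Matrix (Fin n) (Fin n) ℂ := 1 - P with hQ
  have hQeq : Q = U * (1 - d) * star U := by
    rw [hQ, hP, Matrix.mul_sub, Matrix.sub_mul, Matrix.mul_one, hUU']
  have hQpsd : Q.PosSemidef := by
    rw [hQeq]
    have h1 : (1 - d : Matrix (Fin n) (Fin n) ℂ).PosSemidef := by
      rw [hd, show (1 : Matrix (Fin n) (Fin n) ℂ) = diagonal (fun _ => (1:ℂ)) from (diagonal_one).symm,
        diagonal_sub]
      exact Matrix.PosSemidef.diagonal fun i => by split <;> simp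
    have := h1.mul_mul_conjTranspose_same U
    rwa [← star_eq_conjTranspose] at this
  -- trace of P ρ is the real number p
  have hρP : (P * ρ * P).PosSemidef := by
    have := hρ.mul_mul_conjTranspose_same P
    rwa [hPh] at this
  have htrPP : (P * ρ).trace = (P * ρ * P).trace := by
    have h := trace_mul_cycle P ρ P
    rw [hP2] at h
    exact h.symm
  set p : ℝ := ((P * ρ).trace).re with hpdef
  have hpc : (P * ρ).trace = (p : ℂ) := by
    rw [hpdef, htrPP]
    exact (psd_trace hρP).1
  -- p ≤ 1
  have hQtr : (Q * ρ).trace = ((1 - p : ℝ) : ℂ) := by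
    rw [hQ, Matrix.sub_mul, Matrix.one_mul, trace_sub, hρ1, hpc]
    push_cast; ring
  have hp1 : p ≤ 1 := by
    have h0 := (psd_mul_trace hQpsd hρ).2
    rw [hQtr] at h0
    simp only [Complex.ofReal_re] at h0
    linarith
  -- Markov inequality part
  set g : Fin n → ℝ := fun i =>
    hH.eigenvalues i - lam - (if hH.eigenvalues i < lam + δ' then 0 else δ') with hgdef
  have hg : ∀ i, 0 ≤ g i := by
    intro i
    have hl : lam ≤ hH.eigenvalues i := hlam.2 ⟨i, rfl⟩
    rw [hgdef]
    dsimp only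
    split <;> [linarith; skip]
    next h => push_neg at h; linarith
  have h1' : (1 : Matrix (Fin n) (Fin n) ℂ) = U * 1 * star U := by
    rw [Matrix.mul_one, hUU']
  have hdiagsub : diagonal (RCLike.ofReal ∘ hH.eigenvalues) - (lam:ℂ) • (1 : Matrix (Fin n) (Fin n) ℂ)
      - (δ':ℂ) • ((1 : Matrix (Fin n) (Fin n) ℂ) - d) = diagonal (fun i => ((g i : ℝ) : ℂ)) := by
    rw [hd, show (1 : Matrix (Fin n) (Fin n) ℂ) = diagonal (fun _ => (1:ℂ)) from (diagonal_one).symm,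
      diagonal_sub, ← diagonal_smul, ← diagonal_smul, diagonal_sub, diagonal_sub]
    refine congrArg Matrix.diagonal (funext fun i => ?_)
    rw [hgdef]
    simp only [Pi.sub_apply, Pi.smul_apply, Function.comp_apply, smul_eq_mul,
      show (RCLike.ofReal : ℝ → ℂ) = Complex.ofReal from rfl]
    split <;> push_cast <;> ring
  have hconj : ∀ (X Z : Matrix (Fin n) (Fin n) ℂ),
      U * (X - (lam:ℂ) • 1 - (δ':ℂ) • Z) * star U
        = U * X * star U - (lam:ℂ) • 1 - (δ':ℂ) • (U * Z * star U) := by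
    intro X Z
    simp only [Matrix.mul_sub, Matrix.sub_mul, Matrix.mul_smul, Matrix.smul_mul, Matrix.mul_one]
    rw [hUU']
  have hMeq : H - (lam:ℂ) • 1 - (δ':ℂ) • Q = U * diagonal (fun i => ((g i : ℝ) : ℂ)) * star U := by
    conv_rhs => rw [← hdiagsub]
    rw [hconj (diagonal (RCLike.ofReal ∘ hH.eigenvalues)) (1 - d),
    show U * diagonal (RCLike.ofReal ∘ hH.eigenvalues) * star U = H from hH.spectral_theorem.symm, ← hQeq]
  have hMpsd : (H - (lam:ℂ) • 1 - (δ':ℂ) • Q).PosSemidef := by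
    rw [hMeq]
    have h1 : (diagonal (fun i => ((g i : ℝ) : ℂ))).PosSemidef :=
      Matrix.PosSemidef.diagonal fun i => by
        simp only [Pi.zero_apply]
        rw [Complex.zero_le_real]; exact hg i
    have := h1.mul_mul_conjTranspose_same U
    rwa [← star_eq_conjTranspose] at this
  have hMtr : 0 ≤ (((H - (lam:ℂ) • 1 - (δ':ℂ) • Q) * ρ).trace).re := (psd_mul_trace hMpsd hρ).2
  have hexp : ((H - (lam:ℂ) • 1 - (δ':ℂ) • Q) * ρ).trace
      = (H * ρ).trace - (lam:ℂ) - (δ':ℂ) * ((1 - p : ℝ) : ℂ) := by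
    rw [Matrix.sub_mul, Matrix.sub_mul, Matrix.smul_mul, Matrix.smul_mul, Matrix.one_mul,
      trace_sub, trace_sub, trace_smul, trace_smul, hρ1, hQtr, smul_eq_mul, smul_eq_mul, mul_one]
  have hmarkov : δ' * (1 - p) ≤ δ := by
    rw [hexp] at hMtr
    simp only [Complex.sub_re, Complex.mul_re, Complex.ofReal_re, Complex.ofReal_im,
      mul_zero, zero_mul, sub_zero] at hMtr
    linarith
  have h1p : 1 - p ≤ δ / δ' := by
    rw [le_div_iff₀ hδ']
    linarith [hmarkov]
  -- square root of rho and the renormalized part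
  set X : Matrix (Fin n) (Fin n) ℂ := posSemidefSqrt hρ with hX
  have hXh : Xᴴ = X := (posSemidefSqrt_posSemidef hρ).1
  have hXX : X * X = ρ := posSemidefSqrt_mul_self hρ
  set sp : ℝ := Real.sqrt p with hspdef
  have hsp_pos : 0 < sp := Real.sqrt_pos.mpr hPρ
  have hspsq : sp * sp = p := Real.mul_self_sqrt (le_of_lt hPρ)
  set c : ℂ := ((sp⁻¹ : ℝ) : ℂ) with hc
  set Y : Matrix (Fin n) (Fin n) ℂ := c • (P * X) with hY
  have hYH : Yᴴ = c • (X * P) := by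
    rw [hY, conjTranspose_smul, conjTranspose_mul, hXh, hPh, hc]
    rw [show star ((sp⁻¹ : ℝ) : ℂ) = (starRingEnd ℂ) ((sp⁻¹ : ℝ) : ℂ) from rfl, Complex.conj_ofReal]
  have hXPX : (X * (P * X)).trace = (p : ℂ) := by
    rw [← Matrix.mul_assoc, trace_mul_cycle, hXX, trace_mul_comm, hpc]
  have hcp : c * (p : ℂ) = ((sp : ℝ) : ℂ) := by
    rw [hc, ← Complex.ofReal_mul]
    congr 1
    rw [← hspsq, ← mul_assoc, inv_mul_cancel₀ (ne_of_gt hsp_pos), one_mul]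
  have hspc : ((sp : ℝ) : ℂ) * c = 1 := by
    rw [hc, ← Complex.ofReal_mul, mul_inv_cancel₀ (ne_of_gt hsp_pos)]
    norm_num
  have hYY : Y * Yᴴ = ρ' := by
    rw [hY, hYH, Matrix.smul_mul, Matrix.mul_smul, smul_smul, hρ', hpc]
    have hcc : c * c = ((p : ℂ))⁻¹ := by
      rw [hc, ← Complex.ofReal_mul, ← mul_inv, hspsq, Complex.ofReal_inv]
    rw [hcc]
    congr 1
    rw [show P * X * (X * P) = P * (X * X) * P from by noncomm_ring, hXX]
  have hρ'h : ρ'.IsHermitian := by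
    rw [← hYY]; exact Matrix.isHermitian_mul_conjTranspose_self Y
  have hDh : (ρ - ρ').IsHermitian := hρ.1.sub hρ'h
  set A : Matrix (Fin n) (Fin n) ℂ := X - Y with hA
  set B : Matrix (Fin n) (Fin n) ℂ := X + Y with hB
  have hid : ρ - ρ' = (1/2 : ℂ) • (A * Bᴴ + B * Aᴴ) := by
    have expand : A * Bᴴ + B * Aᴴ = (ρ - ρ') + (ρ - ρ') := by
      rw [hA, hB, conjTranspose_add, conjTranspose_sub, hXh, ← hYY, ← hXX]
      noncomm_ring
    rw [expand, ← two_smul ℂ, smul_smul]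
    norm_num
  have hPPX : P * (P * X) = P * X := by rw [← Matrix.mul_assoc, hP2]
  have htrXX : (X * X).trace = 1 := by rw [hXX, hρ1]
  have htA : ((Aᴴ * A).trace) = (((2 : ℝ) - 2*sp : ℝ) : ℂ) := by
    rw [hA, conjTranspose_sub, hXh, hYH, hY]
    simp only [Matrix.sub_mul, Matrix.mul_sub, Matrix.smul_mul, Matrix.mul_smul, smul_smul,
      Matrix.mul_assoc, trace_sub, trace_smul, smul_eq_mul]
    rw [hPPX, htrXX, hXPX, hcp]
    push_cast
    linear_combination hspc - hcp
  have htB : ((Bᴴ * B).trace) = (((2 : ℝ) + 2*sp : ℝ) : ℂ) := by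
    rw [hB, conjTranspose_add, hXh, hYH, hY]
    simp only [Matrix.add_mul, Matrix.mul_add, Matrix.smul_mul, Matrix.mul_smul, smul_smul,
      Matrix.mul_assoc, trace_add, trace_smul, smul_eq_mul]
    rw [hPPX, htrXX, hXPX, hcp]
    push_cast
    linear_combination hspc + hcp
  have main := traceNorm_sym_bound A B (ρ - ρ') hDh hid
  rw [htA, htB] at main
  simp only [Complex.ofReal_re] at main
  have hsple1 : sp ≤ 1 := by
    have := Real.sqrt_le_sqrt hp1
    rwa [Real.sqrt_one] at this
  have hprod : Real.sqrt (2 - 2*sp) * Real.sqrt (2 + 2*sp) = 2 * Real.sqrt (1 - p) := by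
    rw [← Real.sqrt_mul (by linarith)]
    rw [show (2 - 2*sp) * (2 + 2*sp) = 4 * (1 - p) from by rw [← hspsq]; ring]
    rw [Real.sqrt_mul (by norm_num), show (4:ℝ) = 2^2 from by norm_num,
      Real.sqrt_sq (by norm_num : (0:ℝ) ≤ 2)]
  rw [hprod] at main
  have hfin : Real.sqrt (1 - p) ≤ Real.sqrt (δ / δ') := Real.sqrt_le_sqrt h1p
  calc (1/2) * traceNorm (ρ - ρ') ≤ (1/2) * (2 * Real.sqrt (1 - p)) := by linarith [main]
    _ = Real.sqrt (1 - p) := by ring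
    _ ≤ Real.sqrt (δ / δ') := hfin
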